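/- If p is an odd prime and n ≥ 2 is an integer, then the equation x^2 - 1 = p^n has no solution in positive integers x. -/
import Mathlib


theorem frenicle_odd_prime (p n x : ℕ) (hp : p.Prime) (hodd : Odd p)
    (hn : 2 ≤ n) (hx : 0 < x) : (x : ℤ)^2 - 1 ≠ (p : ℤ)^n := by
  intro h
  -- turn into a Nat equation (x-1)*(x+1) = p^n
  have hx1 : 1 ≤ x := hx
  have hnat : (x - 1) * (x + 1) = p ^ n := by
    have : ((x - 1 : ℕ) : ℤ) * ((x + 1 : ℕ) : ℤ) = ((p : ℤ)) ^ n := by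
      push_cast [Nat.cast_sub hx1]
      ring_nf
      ring_nf at h
      linarith
    exact_mod_cast this
  -- x - 1 divides p^n, so it's a power of p
  have hd1 : (x - 1) ∣ p ^ n := ⟨x + 1, hnat.symm⟩
  have hd2 : (x + 1) ∣ p ^ n := ⟨x - 1, by rw [← hnat]; ring⟩
  obtain ⟨a, ha, hae⟩ := (Nat.dvd_prime_pow hp).mp hd1
  obtain ⟨b, hb, hbe⟩ := (Nat.dvd_prime_pow hp).mp hd2
  have hdiff : p ^ a + 2 = p ^ b := by omega
  have ha0 : a = 0 := by
    by_contra h0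
    have : p ∣ p ^ a := dvd_pow_self p h0
    have hpb : p ∣ p ^ b := dvd_pow_self p (by
      rcases Nat.eq_zero_or_pos b with hb0 | hb0
      · exfalso; subst hb0; simp at hdiff
      · omega)
    have : p ∣ 2 := (Nat.dvd_add_right this).mp (hdiff ▸ hpb)
    have h2 := hp.two_le
    have hle : p ≤ 2 := Nat.le_of_dvd (by norm_num) this
    have : p = 2 := by omega
    rw [this] at hodd
    exact (Nat.not_odd_iff_even.mpr (by norm_num)) hodd
  have hx2 : x = 2 := by
    have : x - 1 = 1 := by rw [hae, ha0, pow_zero]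
    omega
  subst hx2
  have : (3 : ℕ) = p ^ n := by omega
  have hp3 : 3 ≤ p := by
    have := hp.two_le
    rcases Nat.odd_iff.mp hodd with h2
    omega
  have : p ^ 2 ≤ p ^ n := Nat.pow_le_pow_right hp.pos hn
  nlinarith
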